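/- Assume K ≥ n where n = |V|, and assume G admits some unit interval representation ℓ₀ with ℓ₀(u) ≤ ℓ₀(v) whenever u < v. Then for every lbound : V → ℝ, the set Rep(G, <, ε, lbound) is nonempty. -/

import Mathlib

/-- A unit interval representation of `G`: distinct vertices are adjacent iff their
points are at distance at most `1`. -/
def IsUIRep {V : Type*} (G : SimpleGraph V) (ℓ : V → ℝ) : Prop :=
  ∀ u v : V, u ≠ v → (G.Adj u v ↔ |ℓ u - ℓ v| ≤ 1)

/-- Two vertices are indistinguishable if they have the same closed neighborhood. -/
def Indist {V : Type*} (G : SimpleGraph V) (u v : V) : Prop :=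
  ∀ w : V, (w = u ∨ G.Adj u w) ↔ (w = v ∨ G.Adj v w)

/-- `GridRep G lt K lbound ℓ`: `ℓ` belongs to `Rep(G, <, ε, lbound)` for `ε = 1/K`,
i.e. it is an `ε`-grid unit interval representation of `G` whose left-to-right order
extends `lt` and which satisfies the lower bounds. -/
def GridRep {V : Type*} (G : SimpleGraph V) (lt : V → V → Prop) (K : ℕ) (lbound : V → ℝ)
    (ℓ : V → ℝ) : Prop :=
  IsUIRep G ℓ ∧ (∀ v : V, ∃ m : ℤ, ℓ v = m * (1 / (K : ℝ))) ∧
    (∀ u v : V, lt u v → ℓ u ≤ ℓ v) ∧ (∀ v : V, lbound v ≤ ℓ v)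


namespace Stmt13Aux

variable {α : Type*}

/-- Sum of edge weights along a list of vertices. -/
def Wt {M : Type*} [AddCommMonoid M] (w : α → α → M) : List α → M
  | [] => 0
  | [_] => 0
  | a :: b :: t => w a b + Wt w (b :: t)

@[simp] lemma Wt_nil {M : Type*} [AddCommMonoid M] (w : α → α → M) : Wt w [] = 0 := rfl

@[simp] lemma Wt_single {M : Type*} [AddCommMonoid M] (w : α → α → M) (a : α) :
    Wt w [a] = 0 := rfl

@[simp] lemma Wt_cons_cons {M : Type*} [AddCommMonoid M] (w : α → α → M) (a b : α)
    (t : List α) : Wt w (a :: b :: t) = w a b + Wt w (b :: t) := rfl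

lemma Wt_append {M : Type*} [AddCommMonoid M] (w : α → α → M) :
    ∀ (a : α) (xs : List α) (y : α) (ys : List α),
      Wt w (a :: xs ++ y :: ys) = Wt w (a :: xs ++ [y]) + Wt w (y :: ys)
  | a, [], y, ys => by simp [add_assoc]
  | a, b :: xs, y, ys => by
      have := Wt_append w b xs y ys
      simp only [List.cons_append, Wt_cons_cons] at this ⊢
      rw [this, add_assoc]

lemma Wt_concat {M : Type*} [AddCommMonoid M] (w : α → α → M) :
    ∀ (a : α) (t : List α) (v : α),
      Wt w ((a :: t) ++ [v]) = Wt w (a :: t) + w ((a :: t).getLast (by simp)) v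
  | a, [], v => by simp
  | a, b :: t, v => by
      have := Wt_concat w b t v
      simp only [List.cons_append, Wt_cons_cons, List.getLast_cons_cons] at this ⊢
      rw [this, add_assoc]

lemma Wt_telescope (φ : α → ℝ) :
    ∀ (a : α) (t : List α),
      Wt (fun x y => φ y - φ x) (a :: t) = φ ((a :: t).getLast (by simp)) - φ a
  | a, [] => by simp
  | a, b :: t => by
      have := Wt_telescope φ b t
      simp only [Wt_cons_cons, List.getLast_cons_cons] at this ⊢
      rw [this]; ring

lemma Wt_mono {M : Type*} [AddCommMonoid M] [PartialOrder M] [IsOrderedAddMonoid M] {w₁ w₂ : α → α → M}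
    (h : ∀ a b, w₁ a b ≤ w₂ a b) : ∀ l : List α, Wt w₁ l ≤ Wt w₂ l
  | [] => le_rfl
  | [_] => le_rfl
  | a :: b :: t => add_le_add (h a b) (Wt_mono h (b :: t))

lemma Wt_nonneg {M : Type*} [AddCommMonoid M] [PartialOrder M] [IsOrderedAddMonoid M] {w : α → α → M}
    (h : ∀ a b, 0 ≤ w a b) : ∀ l : List α, 0 ≤ Wt w l
  | [] => le_rfl
  | [_] => le_rfl
  | a :: b :: t => add_nonneg (h a b) (Wt_nonneg h (b :: t))

lemma Wt_le_length {w : α → α → ℤ} (h : ∀ a b, w a b ≤ 1) :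
    ∀ (a : α) (t : List α), Wt w (a :: t) ≤ (t.length : ℤ)
  | a, [] => by simp
  | a, b :: t => by
      have := Wt_le_length h b t
      simp only [Wt_cons_cons, List.length_cons]
      push_cast
      linarith [h a b]

lemma Wt_ge {w : α → α → ℤ} {C : ℤ} (h : ∀ a b, -C ≤ w a b) :
    ∀ (a : α) (t : List α), -((t.length : ℤ) * C) ≤ Wt w (a :: t)
  | a, [] => by simp
  | a, b :: t => by
      have := Wt_ge h b t
      simp only [Wt_cons_cons, List.length_cons]
      push_cast
      linarith [h a b]

lemma Wt_comb {R : Type*} [CommRing R] (c₁ c₂ c₃ : R) (u v x : α → α → R) :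
    ∀ l : List α,
      Wt (fun a b => c₁ * u a b + c₂ * v a b + c₃ * x a b) l
        = c₁ * Wt u l + c₂ * Wt v l + c₃ * Wt x l
  | [] => by simp
  | [_] => by simp
  | a :: b :: t => by
      have := Wt_comb c₁ c₂ c₃ u v x (b :: t)
      simp only [Wt_cons_cons]
      rw [this]; ring

lemma Wt_cast (w : α → α → ℤ) :
    ∀ l : List α, Wt (fun a b => ((w a b : ℤ) : ℝ)) l = ((Wt w l : ℤ) : ℝ)
  | [] => by simp
  | [_] => by simp
  | a :: b :: t => by
      have := Wt_cast w (b :: t)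
      simp only [Wt_cons_cons]
      rw [this]; push_cast; ring

lemma Wt_lt {w₁ w₂ : α → α → ℝ} (I : α → α → ℤ) (hIn : ∀ a b, 0 ≤ I a b)
    (hle : ∀ a b, w₁ a b ≤ w₂ a b) (hs : ∀ a b, 1 ≤ I a b → w₁ a b < w₂ a b) :
    ∀ l : List α, 1 ≤ Wt I l → Wt w₁ l < Wt w₂ l
  | [], h => by simp at h
  | [_], h => by simp at h
  | a :: b :: t, h => by
      simp only [Wt_cons_cons] at h ⊢
      by_cases hab : 1 ≤ I a b
      · exact add_lt_add_of_lt_of_le (hs a b hab) (Wt_mono hle (b :: t))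
      · have h1 : I a b ≤ 0 := by omega
        have h2 : 1 ≤ Wt I (b :: t) := by
          have := Wt_nonneg hIn (b :: t); omega
        exact add_lt_add_of_le_of_lt (hle a b) (Wt_lt I hIn hle hs (b :: t) h2)

lemma sublist_decomp {x : α} : ∀ {l : List α}, List.Sublist [x, x] l →
    ∃ p m s, l = p ++ x :: m ++ x :: s := by
  intro l h
  induction l with
  | nil => simp at h
  | cons b l ih =>
      cases h with
      | cons _ h' =>
          obtain ⟨p, m, s, rfl⟩ := ih h'
          exact ⟨b :: p, m, s, rfl⟩
      | cons_cons _ h' =>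
          have hx : x ∈ l := List.singleton_sublist.1 h'
          obtain ⟨m, s, rfl⟩ := List.append_of_mem hx
          exact ⟨[], m, s, rfl⟩




set_option maxHeartbeats 1000000 in
lemma key {n K : ℕ} (hn : 0 < n) (hnK : n ≤ K)
    (A : Fin n → Fin n → Prop) (hA : ∀ i j, A i j ↔ A j i)
    (φ : Fin n → ℝ)
    (hmono : ∀ i j : Fin n, i ≤ j → φ i ≤ φ j)
    (hadj : ∀ i j, i ≠ j → A i j → |φ i - φ j| ≤ 1)
    (hnon : ∀ i j, i ≠ j → ¬ A i j → 1 < |φ i - φ j|) :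
    ∃ y : Fin n → ℤ,
      (∀ i j, i ≤ j → y i ≤ y j) ∧
      (∀ i j, i < j → A i j → y j ≤ y i + K) ∧
      (∀ i j, i < j → ¬ A i j → y i + ((K : ℤ) + 1) ≤ y j) := by
  classical
  haveI : Nonempty (Fin n) := ⟨⟨0, hn⟩⟩
  have hKZ : (0 : ℤ) ≤ (K : ℤ) := Int.natCast_nonneg K
  have hnKZ : (n : ℤ) ≤ (K : ℤ) := by exact_mod_cast hnK
  set B : ℤ := ((n : ℤ) + 1) * ((K : ℤ) + 1) with hB
  have hBpos : 0 < B := by positivity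
  -- edge weights
  set w : Fin n → Fin n → ℤ := fun a b =>
    if a < b then (if A a b then (K : ℤ) else B)
    else if b < a then (if A a b then 0 else -((K : ℤ) + 1)) else 0 with hw
  -- indicators
  set IK : Fin n → Fin n → ℤ := fun a b => if a < b ∧ A a b then 1 else 0 with hIK
  set IF : Fin n → Fin n → ℤ := fun a b => if a < b ∧ ¬ A a b then 1 else 0 with hIF
  set IM : Fin n → Fin n → ℤ := fun a b => if b < a ∧ ¬ A a b then 1 else 0 with hIM
  have hIKn : ∀ a b, 0 ≤ IK a b := by intro a b; simp only [hIK]; split <;> norm_num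
  have hIFn : ∀ a b, 0 ≤ IF a b := by intro a b; simp only [hIF]; split <;> norm_num
  have hIMn : ∀ a b, 0 ≤ IM a b := by intro a b; simp only [hIM]; split <;> norm_num
  have hIM1 : ∀ a b, IM a b ≤ 1 := by intro a b; simp only [hIM]; split <;> norm_num
  have hsplit : ∀ a b, w a b = (K : ℤ) * IK a b + B * IF a b + (-((K : ℤ) + 1)) * IM a b := by
    intro a b
    simp only [hw, hIK, hIF, hIM]
    rcases lt_trichotomy a b with hab | hab | hab
    · have hba : ¬ b < a := by omega
      by_cases hAab : A a b <;> simp [hab, hba, hAab]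
    · simp [hab, lt_irrefl]
    · have hab' : ¬ a < b := by omega
      by_cases hAab : A a b <;> simp [hab, hab', hAab]
  have hwlow : ∀ a b, -((K : ℤ) + 1) ≤ w a b := by
    intro a b
    simp only [hw]
    split
    · split <;> [linarith; linarith]
    · split
      · split <;> [linarith; linarith]
      · linarith
  -- span
  set span : ℝ := (Finset.univ.sup' Finset.univ_nonempty φ)
      - (Finset.univ.inf' Finset.univ_nonempty φ) with hspan
  have hspan_le : ∀ a b : Fin n, φ b - φ a ≤ span := by
    intro a b
    have h1 : φ b ≤ Finset.univ.sup' Finset.univ_nonempty φ :=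
      Finset.le_sup' φ (Finset.mem_univ b)
    have h2 : Finset.univ.inf' Finset.univ_nonempty φ ≤ φ a :=
      Finset.inf'_le φ (Finset.mem_univ a)
    simp only [hspan]; linarith
  -- real comparison weight
  set χ : Fin n → Fin n → ℝ := fun a b =>
    (1 : ℝ) * ((IK a b : ℤ) : ℝ) + span * ((IF a b : ℤ) : ℝ) + (-1) * ((IM a b : ℤ) : ℝ)
    with hχ
  have hpt : ∀ a b, φ b - φ a ≤ χ a b := by
    intro a b
    simp only [hχ, hIK, hIF, hIM]
    rcases lt_trichotomy a b with hab | hab | hab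
    · have hba : ¬ b < a := by omega
      by_cases hAab : A a b
      · have hne : a ≠ b := ne_of_lt hab
        have := hadj a b hne hAab
        have h2 := abs_le.1 this
        simp [hab, hba, hAab]
        linarith [h2.1]
      · simp [hab, hba, hAab]
        linarith [hspan_le a b]
    · subst hab; simp
    · have hab' : ¬ a < b := by omega
      by_cases hAab : A a b
      · have h0 : φ b ≤ φ a := hmono b a (le_of_lt hab)
        simp [hab, hab', hAab]
        linarith
      · have hne : a ≠ b := (ne_of_lt hab).symm
        have h1 := hnon a b hne hAab
        have h0 : φ b ≤ φ a := hmono b a (le_of_lt hab)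
        have h2 : |φ a - φ b| = φ a - φ b := abs_of_nonneg (by linarith)
        rw [h2] at h1
        simp [hab, hab', hAab]
        linarith
  have hptlt : ∀ a b, 1 ≤ IM a b → φ b - φ a < χ a b := by
    intro a b hm
    have hcond : b < a ∧ ¬ A a b := by
      by_contra hc
      simp only [hIM, if_neg hc] at hm; omega
    obtain ⟨hab, hAab⟩ := hcond
    have hab' : ¬ a < b := by omega
    have hne : a ≠ b := (ne_of_lt hab).symm
    have h1 := hnon a b hne hAab
    have h0 : φ b ≤ φ a := hmono b a (le_of_lt hab)
    have h2 : |φ a - φ b| = φ a - φ b := abs_of_nonneg (by linarith)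
    rw [h2] at h1
    simp only [hχ, hIK, hIF, hIM]
    simp [hab, hab', hAab]
    linarith
  -- cycle nonnegativity
  have hcyc : ∀ (x : Fin n) (mm : List (Fin n)), mm.length + 2 ≤ n + 1 →
      (0 : ℤ) ≤ Wt w (x :: (mm ++ [x])) := by
    intro x mm hlen
    set c : List (Fin n) := x :: (mm ++ [x]) with hc
    have hwfun : w = fun a b => (K : ℤ) * IK a b + B * IF a b + (-((K : ℤ) + 1)) * IM a b :=
      funext fun a => funext fun b => hsplit a b
    have e1 : Wt w c = (K : ℤ) * Wt IK c + B * Wt IF c + (-((K : ℤ) + 1)) * Wt IM c := by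
      conv_lhs => rw [hwfun]
      exact Wt_comb _ _ _ _ _ _ c
    have hlast : (x :: (mm ++ [x])).getLast (by simp) = x := by
      rw [List.getLast_cons (by simp)]
      exact List.getLast_append_singleton mm
    have e2 : Wt (fun a b => φ b - φ a) c = 0 := by
      rw [hc, Wt_telescope φ x (mm ++ [x]), hlast, sub_self]
    have e3 : Wt (fun a b => φ b - φ a) c ≤ Wt χ c := Wt_mono hpt c
    have hχfun : χ = fun a b =>
        (1 : ℝ) * ((fun a b => ((IK a b : ℤ) : ℝ)) a b)
          + span * ((fun a b => ((IF a b : ℤ) : ℝ)) a b)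
          + (-1) * ((fun a b => ((IM a b : ℤ) : ℝ)) a b) := rfl
    have e4 : Wt χ c = (1 : ℝ) * ((Wt IK c : ℤ) : ℝ) + span * ((Wt IF c : ℤ) : ℝ)
        + (-1) * ((Wt IM c : ℤ) : ℝ) := by
      rw [hχfun, Wt_comb, Wt_cast, Wt_cast, Wt_cast]
    have hMlen : Wt IM c ≤ ((mm.length : ℤ) + 1) := by
      have := Wt_le_length hIM1 x (mm ++ [x])
      simp only [List.length_append, List.length_singleton] at this
      push_cast at this ⊢
      linarith
    have hMn : Wt IM c ≤ (n : ℤ) := by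
      have : (mm.length : ℤ) + 1 ≤ (n : ℤ) := by exact_mod_cast (by omega : mm.length + 1 ≤ n)
      linarith
    have hK0 : 0 ≤ Wt IK c := Wt_nonneg hIKn c
    have hF0 : 0 ≤ Wt IF c := Wt_nonneg hIFn c
    have hM0 : 0 ≤ Wt IM c := Wt_nonneg hIMn c
    by_cases hF : 1 ≤ Wt IF c
    · rw [e1]
      have h1 : B * 1 ≤ B * Wt IF c := by
        apply mul_le_mul_of_nonneg_left hF (le_of_lt hBpos)
      have h2 : ((K : ℤ) + 1) * Wt IM c ≤ ((K : ℤ) + 1) * (n : ℤ) := by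
        apply mul_le_mul_of_nonneg_left hMn (by linarith)
      have h3 : 0 ≤ (K : ℤ) * Wt IK c := mul_nonneg hKZ hK0
      have hBn : B = (n : ℤ) * ((K : ℤ) + 1) + ((K : ℤ) + 1) := by rw [hB]; ring
      nlinarith
    · have hFz : Wt IF c = 0 := le_antisymm (by omega) hF0
      by_cases hM : 1 ≤ Wt IM c
      · have e5 : Wt (fun a b => φ b - φ a) c < Wt χ c :=
          Wt_lt IM hIMn hpt hptlt c hM
        rw [e2, e4, hFz] at e5
        have e6 : ((Wt IM c : ℤ) : ℝ) < ((Wt IK c : ℤ) : ℝ) := by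
          push_cast at e5 ⊢; linarith
        have e7 : Wt IM c + 1 ≤ Wt IK c := by exact_mod_cast Int.add_one_le_iff.2 (by exact_mod_cast e6)
        rw [e1, hFz]
        have h1 : (K : ℤ) * (Wt IM c + 1) ≤ (K : ℤ) * Wt IK c :=
          mul_le_mul_of_nonneg_left e7 hKZ
        nlinarith
      · have hMz : Wt IM c = 0 := le_antisymm (by omega) hM0
        rw [e1, hFz, hMz]
        have h3 : 0 ≤ (K : ℤ) * Wt IK c := mul_nonneg hKZ hK0
        linarith
  -- trimming
  have htrim : ∀ (p : List (Fin n)) (x : Fin n) (mm rest : List (Fin n)),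
      mm.length + 2 ≤ n + 1 →
      Wt w (p ++ x :: rest) ≤ Wt w (p ++ x :: (mm ++ x :: rest)) := by
    intro p x mm rest hlen
    have hsplit2 : Wt w (x :: (mm ++ x :: rest))
        = Wt w (x :: (mm ++ [x])) + Wt w (x :: rest) := by
      have h1 : x :: (mm ++ x :: rest) = (x :: mm) ++ x :: rest := by simp
      have h2 : (x :: mm) ++ [x] = x :: (mm ++ [x]) := by simp
      rw [h1, Wt_append w x mm x rest, h2]
    have hcge : 0 ≤ Wt w (x :: (mm ++ [x])) := hcyc x mm hlen
    cases p with
    | nil =>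
        simp only [List.nil_append]
        rw [hsplit2]; linarith
    | cons q p' =>
        have h3 : (q :: p') ++ x :: (mm ++ x :: rest)
            = q :: p' ++ x :: (mm ++ x :: rest) := by simp
        rw [show (q :: p') ++ x :: (mm ++ x :: rest) = q :: p' ++ x :: (mm ++ x :: rest) from rfl,
          Wt_append w q p' x (mm ++ x :: rest),
          show (q :: p') ++ x :: rest = q :: p' ++ x :: rest from rfl,
          Wt_append w q p' x rest, hsplit2]
        linarith
  -- global lower bound on walk weights
  have hLB : ∀ (N : ℕ) (a : Fin n) (t : List (Fin n)), t.length ≤ N →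
      -((n : ℤ) * ((K : ℤ) + 1)) ≤ Wt w (a :: t) := by
    intro N
    induction N with
    | zero =>
        intro a t ht
        have : t = [] := List.length_eq_zero_iff.1 (by omega)
        subst this
        simp only [Wt_single]
        have h0 : (0:ℤ) ≤ (n : ℤ) * ((K : ℤ) + 1) := by positivity
        linarith
    | succ N ih =>
        intro a t ht
        by_cases hlen : t.length ≤ n
        · have h1 := Wt_ge hwlow a t
          have h2 : (t.length : ℤ) * ((K : ℤ) + 1) ≤ (n : ℤ) * ((K : ℤ) + 1) := by
            apply mul_le_mul_of_nonneg_right _ (by linarith)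
            exact_mod_cast hlen
          linarith
        · -- find a duplicate among the first n+1 entries
          push_neg at hlen
          set l : List (Fin n) := a :: t with hl
          have hlenl : n + 1 ≤ l.length := by simp [hl]; omega
          have htake : (l.take (n + 1)).length = n + 1 := by
            rw [List.length_take]; omega
          have hnd : ¬ (l.take (n + 1)).Nodup := by
            intro hnd
            have := hnd.length_le_card
            rw [htake, Fintype.card_fin] at this; omega
          obtain ⟨x, hdup⟩ := List.exists_duplicate_iff_not_nodup.2 hnd
          have hsub : List.Sublist [x, x] (l.take (n + 1)) :=
            List.duplicate_iff_sublist.1 hdup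
          obtain ⟨p, mm, s2, hdec⟩ := sublist_decomp hsub
          set rest : List (Fin n) := s2 ++ l.drop (n + 1) with hrest
          have hWeq : l = p ++ x :: (mm ++ x :: rest) := by
            conv_lhs => rw [← List.take_append_drop (n + 1) l]
            rw [hdec, hrest]
            simp
          have hmmlen : mm.length + 2 ≤ n + 1 := by
            have h5 := htake
            rw [hdec] at h5
            simp only [List.length_append, List.length_cons] at h5
            omega
          have htlen : t.length = p.length + mm.length + rest.length + 1 := by
            have h6 := congrArg List.length hWeq
            rw [hl] at h6
            simp only [List.length_cons, List.length_append] at h6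
            omega
          cases p with
          | nil =>
              have hlen' : rest.length ≤ N := by
                simp only [List.length_nil] at htlen
                omega
              have h1 := htrim [] x mm rest hmmlen
              simp only [List.nil_append] at h1
              have h2 := ih x rest hlen'
              rw [hWeq]
              simp only [List.nil_append]
              linarith
          | cons q p' =>
              have hlen' : (p' ++ x :: rest).length ≤ N := by
                simp only [List.length_cons] at htlen
                simp only [List.length_append, List.length_cons]
                omega
              have h1 := htrim (q :: p') x mm rest hmmlen
              have h2 := ih q (p' ++ x :: rest) hlen'
              have h3 : q :: (p' ++ x :: rest) = (q :: p') ++ x :: rest := rfl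
              rw [h3] at h2
              rw [hWeq]
              linarith
  -- Bellman-Ford iteration
  set z0 : Fin n → ℤ := fun _ => 0 with hz0
  set Fop : (Fin n → ℤ) → (Fin n → ℤ) := fun y v =>
    min (y v) (Finset.univ.inf' Finset.univ_nonempty (fun u => y u + w u v)) with hFop
  have hFle : ∀ y v, Fop y v ≤ y v := fun y v => min_le_left _ _
  have hFfix : ∀ y, Fop y = y → ∀ u v, y v ≤ y u + w u v := by
    intro y hy u v
    have h1 : y v = min (y v) (Finset.univ.inf' Finset.univ_nonempty (fun u => y u + w u v)) :=
      (congrFun hy v).symm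
    have h2 : y v ≤ Finset.univ.inf' Finset.univ_nonempty (fun u => y u + w u v) := by
      rw [h1]; exact min_le_right _ _
    exact le_trans h2 (Finset.inf'_le _ (Finset.mem_univ u))
  have hwalk : ∀ (m : ℕ) (v : Fin n), ∃ (a : Fin n) (t : List (Fin n)),
      ((a :: t).getLast (List.cons_ne_nil a t)) = v ∧ (Fop^[m] z0) v = Wt w (a :: t) := by
    intro m
    induction m with
    | zero => intro v; exact ⟨v, [], by simp, by simp [hz0]⟩
    | succ m ih =>
        intro v
        rw [Function.iterate_succ_apply']
        rcases min_cases ((Fop^[m] z0) v)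
            (Finset.univ.inf' Finset.univ_nonempty (fun u => (Fop^[m] z0) u + w u v)) with
          ⟨heq, _⟩ | ⟨heq, _⟩
        · obtain ⟨a, t, hlast, hat⟩ := ih v
          exact ⟨a, t, hlast, heq.trans hat⟩
        · obtain ⟨u, _, hu⟩ := Finset.exists_mem_eq_inf' Finset.univ_nonempty
            (fun u => (Fop^[m] z0) u + w u v)
          obtain ⟨a, t, hlast, hat⟩ := ih u
          refine ⟨a, t ++ [v], ?_, ?_⟩
          · exact List.getLast_append_singleton (a :: t)
          · have hconcat := Wt_concat w a t v
            rw [hlast] at hconcat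
            rw [show a :: (t ++ [v]) = (a :: t) ++ [v] from rfl, hconcat, ← hat]
            rw [hFop]
            simp only []
            rw [heq, hu]
  have hbdd : ∀ (m : ℕ) (v : Fin n), -((n : ℤ) * ((K : ℤ) + 1)) ≤ (Fop^[m] z0) v := by
    intro m v
    obtain ⟨a, t, _, hat⟩ := hwalk m v
    rw [hat]
    exact hLB t.length a t le_rfl
  have hdec : ∀ (m : ℕ) (v : Fin n), (Fop^[m+1] z0) v ≤ (Fop^[m] z0) v := by
    intro m v
    rw [Function.iterate_succ_apply']
    exact hFle _ _
  -- stabilization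
  obtain ⟨M, hM⟩ : ∃ m : ℕ, Fop (Fop^[m] z0) = Fop^[m] z0 := by
    by_contra hcon
    push_neg at hcon
    set S : ℕ → ℤ := fun m => ∑ v : Fin n, (Fop^[m] z0) v with hS
    have hstep : ∀ m, S (m + 1) ≤ S m - 1 := by
      intro m
      have hne : Fop^[m+1] z0 ≠ Fop^[m] z0 := by
        rw [Function.iterate_succ_apply']
        exact hcon m
      obtain ⟨v0, hv0⟩ := Function.ne_iff.1 hne
      have hlt : ∑ v : Fin n, (Fop^[m+1] z0) v < ∑ v : Fin n, (Fop^[m] z0) v :=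
        Finset.sum_lt_sum (fun v _ => hdec m v)
          ⟨v0, Finset.mem_univ v0, lt_of_le_of_ne (hdec m v0) hv0⟩
      have := Int.lt_iff_add_one_le.1 hlt
      simp only [hS]
      omega
    have hSle : ∀ m, S m ≤ - (m : ℤ) := by
      intro m
      induction m with
      | zero => simp [hS, hz0]
      | succ m ih =>
          have := hstep m
          push_cast
          push_cast at ih
          omega
    have hSge : ∀ m, -((n : ℤ) * ((n : ℤ) * ((K : ℤ) + 1))) ≤ S m := by
      intro m
      have h1 : ∀ v ∈ Finset.univ, -((n : ℤ) * ((K : ℤ) + 1)) ≤ (Fop^[m] z0) v :=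
        fun v _ => hbdd m v
      have h2 := Finset.card_nsmul_le_sum Finset.univ (Fop^[m] z0)
        (-((n : ℤ) * ((K : ℤ) + 1))) h1
      simp only [Finset.card_univ, Fintype.card_fin, nsmul_eq_mul] at h2
      calc -((n : ℤ) * ((n : ℤ) * ((K : ℤ) + 1))) = (n : ℤ) * -((n : ℤ) * ((K : ℤ) + 1)) := by ring
        _ ≤ S m := h2
    have hcontra := le_trans (hSge (n * (n * (K + 1)) + 1)) (hSle (n * (n * (K + 1)) + 1))
    push_cast at hcontra
    omega
  set y : Fin n → ℤ := Fop^[M] z0 with hy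
  have hcon := hFfix y hM
  have hmono' : ∀ i j : Fin n, i ≤ j → y i ≤ y j := by
    intro i j hij
    rcases eq_or_lt_of_le hij with rfl | hij
    · exact le_rfl
    · have h1 := hcon j i
      have h2 : w j i ≤ 0 := by
        have hji : ¬ j < i := by omega
        simp only [hw, if_neg hji, if_pos hij]
        split <;> linarith
      linarith
  refine ⟨y, hmono', ?_, ?_⟩
  · intro i j hij hAij
    have h1 := hcon i j
    have h2 : w i j = (K : ℤ) := by simp only [hw, if_pos hij, if_pos hAij]
    linarith [h1, h2.le, h2.ge]
  · intro i j hij hAij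
    have h1 := hcon j i
    have hAji : ¬ A j i := fun hji => hAij ((hA i j).2 hji)
    have hji : ¬ j < i := by omega
    have h2 : w j i = -((K : ℤ) + 1) := by
      simp only [hw, if_neg hji, if_pos hij, if_neg hAji]
    rw [h2] at h1
    linarith



end Stmt13Aux

open Stmt13Aux in
/-- if `K ≥ n` and `G` has a unit interval representation respecting
`lt`, then `Rep(G, <, ε, lbound)` is nonempty for every `lbound`. -/
theorem stmt13 {V : Type*} [Fintype V] (G : SimpleGraph V) (lt : V → V → Prop)
    (hirr : ∀ v : V, ¬ lt v v)
    (htrans : ∀ a b c : V, lt a b → lt b c → lt a c)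
    (hcomp : ∀ u v : V, ¬ Indist G u v → lt u v ∨ lt v u)
    (K : ℕ) (hK : 0 < K) (hKn : Fintype.card V ≤ K)
    (h : ∃ ℓ₀ : V → ℝ, IsUIRep G ℓ₀ ∧ ∀ u v : V, lt u v → ℓ₀ u ≤ ℓ₀ v)
    (lbound : V → ℝ) :
    ∃ ℓ : V → ℝ, GridRep G lt K lbound ℓ := by
  classical
  obtain ⟨ℓ₀, hrep₀, hmono₀⟩ := h
  rcases isEmpty_or_nonempty V with hemp | hne
  · refine ⟨fun _ => 0, ?_, ?_, ?_, ?_⟩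
    · intro u v _; exact isEmptyElim u
    · intro v; exact isEmptyElim v
    · intro u v _; exact isEmptyElim u
    · intro v; exact isEmptyElim v
  · set r' : V → V → Prop := fun u v => (ℓ₀ u < ℓ₀ v ∨ (ℓ₀ u = ℓ₀ v ∧ lt u v)) ∨ u = v with hr'
    haveI hrefl : IsRefl V r' := ⟨fun a => Or.inr rfl⟩
    haveI htr : IsTrans V r' := ⟨by
      intro a b c hab hbc
      rcases hab with hab | rfl
      · rcases hbc with hbc | rfl
        · rcases hab with hab | ⟨hab1, hab2⟩
          · rcases hbc with hbc | ⟨hbc1, hbc2⟩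
            · exact Or.inl (Or.inl (lt_trans hab hbc))
            · exact Or.inl (Or.inl (by rw [← hbc1]; exact hab))
          · rcases hbc with hbc | ⟨hbc1, hbc2⟩
            · exact Or.inl (Or.inl (by rw [hab1]; exact hbc))
            · exact Or.inl (Or.inr ⟨hab1.trans hbc1, htrans _ _ _ hab2 hbc2⟩)
        · exact Or.inl hab
      · exact hbc⟩
    haveI hanti : IsAntisymm V r' := ⟨by
      intro a b hab hba
      rcases hab with hab | rfl
      · rcases hba with hba | rfl
        · rcases hab with hab | ⟨hab1, hab2⟩ <;> rcases hba with hba | ⟨hba1, hba2⟩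
          · exact absurd (lt_trans hab hba) (lt_irrefl _)
          · exact absurd hab (by rw [hba1]; exact lt_irrefl _)
          · exact absurd hba (by rw [hab1]; exact lt_irrefl _)
          · exact absurd (htrans _ _ _ hab2 hba2) (hirr a)
        · rfl
      · rfl⟩
    haveI hpre : IsPreorder V r' := ⟨⟩
    haveI hpo : IsPartialOrder V r' := ⟨⟩
    obtain ⟨sle, hslin, hrs⟩ := extend_partialOrder r'
    haveI := hslin
    letI : LinearOrder V :=
      { le := sle
        le_refl := fun a => refl_of sle a
        le_trans := fun a b c hab hbc => trans_of sle hab hbc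
        le_antisymm := fun a b h1 h2 => antisymm_of sle h1 h2
        le_total := fun a b => total_of sle a b
        toDecidableLE := fun a b => Classical.propDecidable _ }
    set n := Fintype.card V with hn'
    have hn : 0 < n := by rw [hn']; exact Fintype.card_pos
    let e : Fin n ≃o V := monoEquivOfFin V hn'.symm
    have hsle_val : ∀ u v : V, sle u v → ℓ₀ u ≤ ℓ₀ v := by
      intro u v huv
      by_contra hgt
      push_neg at hgt
      have h1 : r' v u := Or.inl (Or.inl hgt)
      have h2 : sle v u := hrs v u h1
      have h3 : u = v := antisymm_of sle huv h2
      rw [h3] at hgt; exact lt_irrefl _ hgt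
    have hlt_sle : ∀ u v : V, lt u v → sle u v := by
      intro u v hl
      refine hrs u v (Or.inl ?_)
      rcases eq_or_lt_of_le (hmono₀ u v hl) with heq | hlt'
      · exact Or.inr ⟨heq, hl⟩
      · exact Or.inl hlt'
    set A : Fin n → Fin n → Prop := fun i j => G.Adj (e i) (e j) with hA'
    set φ : Fin n → ℝ := fun i => ℓ₀ (e i) with hφ
    have hAsym : ∀ i j, A i j ↔ A j i := by
      intro i j; simp only [hA']; exact G.adj_comm _ _
    have hmonoφ : ∀ i j : Fin n, i ≤ j → φ i ≤ φ j := by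
      intro i j hij
      exact hsle_val _ _ (e.monotone hij)
    have hadjφ : ∀ i j, i ≠ j → A i j → |φ i - φ j| ≤ 1 := by
      intro i j hij hAij
      exact (hrep₀ (e i) (e j) (fun hh => hij (e.toEquiv.injective hh))).1 hAij
    have hnonφ : ∀ i j, i ≠ j → ¬ A i j → 1 < |φ i - φ j| := by
      intro i j hij hAij
      have hiff := hrep₀ (e i) (e j) (fun hh => hij (e.toEquiv.injective hh))
      exact not_le.1 (fun hle => hAij (hiff.2 hle))
    obtain ⟨y, hymono, hyadj, hynon⟩ := key hn hKn A hAsym φ hmonoφ hadjφ hnonφ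
    have hKpos : (0:ℝ) < K := by exact_mod_cast hK
    set c : ℤ := Finset.univ.sup' Finset.univ_nonempty
        (fun v : V => ⌈(K:ℝ) * lbound v - ((y (e.symm v) : ℤ) : ℝ)⌉) with hc
    set ℓf : V → ℝ := fun v => ((y (e.symm v) + c : ℤ) : ℝ) * (1 / (K : ℝ)) with hℓ
    have hdiff : ∀ u v : V, ℓf v - ℓf u
        = (((y (e.symm v)) : ℝ) - ((y (e.symm u)) : ℝ)) * (1 / (K:ℝ)) := by
      intro u v; simp only [hℓ]; push_cast; ring
    have hpair : ∀ u v : V, e.symm u < e.symm v → (G.Adj u v ↔ |ℓf u - ℓf v| ≤ 1) := by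
      intro u v hij
      have hAiff : G.Adj u v ↔ A (e.symm u) (e.symm v) := by
        simp only [hA', OrderIso.apply_symm_apply]
      constructor
      · intro hadj'
        have h1 := hyadj _ _ hij (hAiff.1 hadj')
        have h2 := hymono _ _ (le_of_lt hij)
        have h3 : (0:ℝ) ≤ ((y (e.symm v)) : ℝ) - ((y (e.symm u)) : ℝ) := by
          rw [sub_nonneg]; exact_mod_cast h2
        have h4 : ((y (e.symm v)) : ℝ) - ((y (e.symm u)) : ℝ) ≤ (K:ℝ) := by
          have h5 : y (e.symm v) - y (e.symm u) ≤ (K:ℤ) := by linarith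
          exact_mod_cast h5
        rw [abs_sub_comm, hdiff u v, abs_of_nonneg (mul_nonneg h3 (by positivity))]
        calc (((y (e.symm v)) : ℝ) - ((y (e.symm u)) : ℝ)) * (1 / (K:ℝ))
            ≤ (K:ℝ) * (1 / (K:ℝ)) := by
              apply mul_le_mul_of_nonneg_right h4; positivity
          _ = 1 := by field_simp
      · intro habs
        by_contra hnadj
        have h1 := hynon _ _ hij (fun hAij => hnadj (hAiff.2 hAij))
        have h4 : (K:ℝ) + 1 ≤ ((y (e.symm v)) : ℝ) - ((y (e.symm u)) : ℝ) := by
          have h5 : ((K:ℤ)+1) ≤ y (e.symm v) - y (e.symm u) := by linarith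
          exact_mod_cast h5
        have h6 : (1:ℝ) < ((K:ℝ)+1) * (1 / (K:ℝ)) := by
          rw [mul_one_div, lt_div_iff₀ hKpos]; linarith
        have h5 : (1:ℝ) < ℓf v - ℓf u := by
          rw [hdiff u v]
          have h7 := mul_le_mul_of_nonneg_right h4 (le_of_lt (by positivity : (0:ℝ) < 1 / (K:ℝ)))
          linarith
        have h8 := le_abs_self (ℓf v - ℓf u)
        rw [abs_sub_comm] at habs
        linarith
    refine ⟨ℓf, ?_, ?_, ?_, ?_⟩
    · intro u v huv
      have hne2 : e.symm u ≠ e.symm v := fun hh => huv ((OrderIso.symm e).toEquiv.injective hh)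
      rcases lt_trichotomy (e.symm u) (e.symm v) with hlt2 | heq | hgt
      · exact hpair u v hlt2
      · exact absurd heq hne2
      · have hthis := hpair v u hgt
        rw [G.adj_comm, abs_sub_comm]
        exact hthis
    · intro v; exact ⟨y (e.symm v) + c, rfl⟩
    · intro u v hluv
      have hsuv : e.symm u ≤ e.symm v := (OrderIso.symm e).monotone (hlt_sle u v hluv)
      have h1 := hymono _ _ hsuv
      simp only [hℓ]
      have h2 : ((y (e.symm u) + c : ℤ) : ℝ) ≤ ((y (e.symm v) + c : ℤ) : ℝ) := by
        exact_mod_cast add_le_add_left h1 c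
      exact mul_le_mul_of_nonneg_right h2 (by positivity)
    · intro v
      have h1 : (⌈(K:ℝ) * lbound v - ((y (e.symm v) : ℤ) : ℝ)⌉ : ℤ) ≤ c := by
        rw [hc]
        exact Finset.le_sup' (fun v : V => ⌈(K:ℝ) * lbound v - ((y (e.symm v) : ℤ) : ℝ)⌉)
          (Finset.mem_univ v)
      have h2 : (K:ℝ) * lbound v - ((y (e.symm v)) : ℝ) ≤ (c : ℝ) :=
        le_trans (Int.le_ceil _) (by exact_mod_cast h1)
      simp only [hℓ]
      rw [mul_one_div, le_div_iff₀ hKpos]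
      push_cast
      linarith
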